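/- For the evolving set process of a finite Markov kernel P with stationary distribution π, for any subset A of the state space, ∫₀¹ π(A_u) du = π(A), where A_u = {y : Q(A,y) ≥ u·π(y)}. -/

import Mathlib

open Finset

variable {V : Type*}

/-- Ergodic flow from a set `A` into a state `y`: `Q(A,y) = ∑_{x∈A} π(x) P(x,y)`. -/
def ergFlow [Fintype V] (π : V → ℝ) (P : Matrix V V ℝ) (A : Finset V) (y : V) : ℝ :=
  ∑ x ∈ A, π x * P x y

/-- The evolving set `A_u = {y : Q(A,y) ≥ u π(y)}`. -/
noncomputable def evolSet [Fintype V] (π : V → ℝ) (P : Matrix V V ℝ) (A : Finset V) (u : ℝ) :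
    Finset V :=
  Finset.univ.filter (fun y => u * π y ≤ ergFlow π P A y)

/-- Stationary mass of a set: `π(A)`. -/
def mass (π : V → ℝ) (A : Finset V) : ℝ := ∑ y ∈ A, π y

/-- Ergodic flow between sets: `Q(A,B)`. -/
def ergFlowSet (π : V → ℝ) (P : Matrix V V ℝ) (A B : Finset V) : ℝ :=
  ∑ x ∈ A, ∑ y ∈ B, π x * P x y


open MeasureTheory intervalIntegral in
lemma step_integrable' (c b : ℝ) :
    IntervalIntegrable (fun u => if u ≤ c then b else 0) volume 0 1 := by
  have : (fun u : ℝ => if u ≤ c then b else 0)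
      = (Set.Iic c).indicator (fun _ => b) := by
    funext u; simp [Set.indicator_apply]
  rw [this, intervalIntegrable_iff]
  exact (integrableOn_const measure_Ioc_lt_top.ne).indicator measurableSet_Iic

open MeasureTheory intervalIntegral in
lemma step_integral' (c b : ℝ) (hc0 : 0 ≤ c) (hc1 : c ≤ 1) :
    ∫ u in (0:ℝ)..1, (if u ≤ c then b else 0) = c * b := by
  have h : (fun u : ℝ => if u ≤ c then b else 0)
      = (Set.Iic c).indicator (fun _ => b) := by
    funext u; simp [Set.indicator_apply]
  rw [h, intervalIntegral.integral_of_le zero_le_one,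
    MeasureTheory.setIntegral_indicator measurableSet_Iic]
  have hset : Set.Ioc (0:ℝ) 1 ∩ Set.Iic c = Set.Ioc 0 c := by
    ext u
    simp only [Set.mem_inter_iff, Set.mem_Ioc, Set.mem_Iic]
    constructor
    · rintro ⟨⟨h1, _⟩, h3⟩; exact ⟨h1, h3⟩
    · rintro ⟨h1, h2⟩; exact ⟨⟨h1, h2.trans hc1⟩, h2⟩
  rw [hset, MeasureTheory.setIntegral_const, MeasureTheory.measureReal_def, Real.volume_Ioc]
  simp [ENNReal.toReal_ofReal hc0]

/-- Martingale identity for evolving sets: `∫₀¹ π(A_u) du = π(A)`. -/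
theorem evolSet_martingale [Fintype V] [DecidableEq V]
    (π : V → ℝ) (P : Matrix V V ℝ)
    (hPnn : ∀ x y, 0 ≤ P x y) (hProw : ∀ x, ∑ y, P x y = 1)
    (hπpos : ∀ x, 0 < π x) (hπsum : ∑ x, π x = 1)
    (hstat : ∀ y, ∑ x, π x * P x y = π y)
    (hirr : ∀ x y : V, ∃ n : ℕ, 0 < (P ^ n) x y)
    (A : Finset V) :
    ∫ u in (0:ℝ)..1, mass π (evolSet π P A u) = mass π A := by
  have hQnn : ∀ y, 0 ≤ ergFlow π P A y := fun y =>
    Finset.sum_nonneg fun x _ => mul_nonneg (hπpos x).le (hPnn x y)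
  have hQle : ∀ y, ergFlow π P A y ≤ π y := by
    intro y
    rw [← hstat y]
    exact Finset.sum_le_sum_of_subset_of_nonneg (Finset.subset_univ A)
      (fun x _ _ => mul_nonneg (hπpos x).le (hPnn x y))
  have key : ∀ u : ℝ, mass π (evolSet π P A u)
      = ∑ y, if u ≤ ergFlow π P A y / π y then π y else 0 := by
    intro u
    rw [mass, evolSet, Finset.sum_filter]
    refine Finset.sum_congr rfl fun y _ => ?_
    exact if_congr ((le_div_iff₀ (hπpos y)).symm) rfl rfl
  rw [intervalIntegral.integral_congr (fun u _ => key u),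
    intervalIntegral.integral_finset_sum
      (fun y _ => step_integrable' (ergFlow π P A y / π y) (π y))]
  have : ∀ y : V, ∫ u in (0:ℝ)..1, (if u ≤ ergFlow π P A y / π y then π y else 0)
      = ergFlow π P A y := by
    intro y
    rw [step_integral' _ _ (div_nonneg (hQnn y) (hπpos y).le)
      ((div_le_one (hπpos y)).2 (hQle y))]
    exact div_mul_cancel₀ _ (hπpos y).ne'
  rw [Finset.sum_congr rfl fun y _ => this y]
  unfold ergFlow mass
  rw [Finset.sum_comm]
  refine Finset.sum_congr rfl fun x _ => ?_
  rw [← Finset.mul_sum, hProw, mul_one]
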